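/- In the setting above, ∂²_{mm}(m H(p,m)) equals the Schur complement of the block m D²_{vv}f(v*,m) in the matrix Θ(v*, m) = [[∂²_{mm}(m f(v*,m)), m ∂_m∇_v f(v*,m)ᵀ],[m ∂_m∇_v f(v*,m), m D²_{vv}f(v*,m)]]; that is, ∂²_{mm}(m H(p,m)) = ∂²_{mm}(m f(·,m))(v*) − m ∂_m∇_v f(v*,m) · (m D²_{vv}f(v*,m))⁻¹ (m ∂_m∇_v f(v*,m)). Consequently, if Θ(v,m) is positive definite for all (v,m) with m > 0, then m ↦ m H(p,m) is strictly convex on (0,∞) for every p. -/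

import Mathlib

open InnerProductSpace

namespace Stmt13

variable {d : ℕ}

local notation "E" => EuclideanSpace ℝ (Fin d)

/-- The joint function. -/
def Fj (f : EuclideanSpace ℝ (Fin d) → ℝ → ℝ) : EuclideanSpace ℝ (Fin d) × ℝ → ℝ :=
  fun q => f q.1 q.2

/-- The gradient in `v` as a function of both variables. -/
noncomputable def G (f : EuclideanSpace ℝ (Fin d) → ℝ → ℝ) :
    EuclideanSpace ℝ (Fin d) × ℝ → EuclideanSpace ℝ (Fin d) :=
  fun q => gradient (fun u => f u q.2) q.1

variable {f : EuclideanSpace ℝ (Fin d) → ℝ → ℝ}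

theorem hasFDerivAt_fix2 {v : E} {t : ℝ} (hdiff : DifferentiableAt ℝ (Fj f) (v, t)) :
    HasFDerivAt (fun u => f u t)
      ((fderiv ℝ (Fj f) (v, t)).comp (ContinuousLinearMap.inl ℝ E ℝ)) v :=
  hdiff.hasFDerivAt.comp (g := Fj f) v (hasFDerivAt_prodMk_left (𝕜 := ℝ) v t)

theorem inner_G (hf2 : ContDiff ℝ 2 (Fj f)) (v : E) (t : ℝ) (w : E) :
    ⟪G f (v, t), w⟫_ℝ = fderiv ℝ (Fj f) (v, t) (w, 0) := by
  have hd : DifferentiableAt ℝ (Fj f) (v, t) :=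
    (hf2.differentiable (by norm_num)).differentiableAt
  have h1 : fderiv ℝ (fun u => f u t) v
      = (fderiv ℝ (Fj f) (v, t)).comp (ContinuousLinearMap.inl ℝ E ℝ) :=
    (hasFDerivAt_fix2 hd).fderiv
  show ⟪(toDual ℝ E).symm (fderiv ℝ (fun u => f u t) v), w⟫_ℝ = _
  rw [toDual_symm_apply, h1]
  rfl

theorem contDiff_G (hf2 : ContDiff ℝ 2 (Fj f)) : ContDiff ℝ 1 (G f) := by
  have hGeq : G f = fun q => (toDual ℝ E).symm
      (((ContinuousLinearMap.compL ℝ E (E × ℝ) ℝ).flip (ContinuousLinearMap.inl ℝ E ℝ))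
        (fderiv ℝ (Fj f) q)) := by
    funext q
    have hd : DifferentiableAt ℝ (Fj f) (q.1, q.2) :=
      (hf2.differentiable (by norm_num)).differentiableAt
    show gradient (fun u => f u q.2) q.1 = _
    rw [gradient, (hasFDerivAt_fix2 hd).fderiv]
    rfl
  rw [hGeq]
  exact (LinearIsometryEquiv.contDiff _).comp
    ((((ContinuousLinearMap.compL ℝ E (E × ℝ) ℝ).flip
      (ContinuousLinearMap.inl ℝ E ℝ)).contDiff).comp (hf2.fderiv_right (by norm_num)))

theorem inner_fderiv_G (hf2 : ContDiff ℝ 2 (Fj f)) (q : E × ℝ) (ξ : E × ℝ) (y : E) :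
    ⟪fderiv ℝ (G f) q ξ, y⟫_ℝ = fderiv ℝ (fderiv ℝ (Fj f)) q ξ (y, 0) := by
  have hG1 : ContDiff ℝ 1 (G f) := contDiff_G hf2
  have hF' : ContDiff ℝ 1 (fderiv ℝ (Fj f)) := hf2.fderiv_right (by norm_num)
  have h1 : HasFDerivAt (fun q' => (innerSL ℝ y) (G f q'))
      ((innerSL ℝ y).comp (fderiv ℝ (G f) q)) q :=
    ((innerSL ℝ y).hasFDerivAt).comp q ((hG1.differentiable one_ne_zero) q).hasFDerivAt
  have h2 : (fun q' => (innerSL ℝ y) (G f q'))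
      = fun q' => (ContinuousLinearMap.apply ℝ ℝ ((y, 0) : E × ℝ)) (fderiv ℝ (Fj f) q') := by
    funext q'
    show ⟪y, G f q'⟫_ℝ = fderiv ℝ (Fj f) q' (y, 0)
    rw [real_inner_comm]
    exact inner_G hf2 q'.1 q'.2 y
  have h3 : HasFDerivAt
      (fun q' => (ContinuousLinearMap.apply ℝ ℝ ((y, 0) : E × ℝ)) (fderiv ℝ (Fj f) q'))
      ((ContinuousLinearMap.apply ℝ ℝ ((y, 0) : E × ℝ)).comp (fderiv ℝ (fderiv ℝ (Fj f)) q)) q :=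
    HasFDerivAt.comp (g := ⇑(ContinuousLinearMap.apply ℝ ℝ ((y, 0) : E × ℝ)))
      (x := q) (ContinuousLinearMap.hasFDerivAt _)
      ((hF'.differentiable one_ne_zero) q).hasFDerivAt
  rw [h2] at h1
  have h4 := h1.unique h3
  have h5 := DFunLike.congr_fun h4 ξ
  rw [real_inner_comm]
  exact h5

theorem hasFDerivAt_G_fix2 (hf2 : ContDiff ℝ 2 (Fj f)) (v : E) (t : ℝ) :
    HasFDerivAt (fun v' => G f (v', t))
      ((fderiv ℝ (G f) (v, t)).comp (ContinuousLinearMap.inl ℝ E ℝ)) v :=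
  (((contDiff_G hf2).differentiable one_ne_zero) (v, t)).hasFDerivAt.comp (g := G f) v
    (hasFDerivAt_prodMk_left (𝕜 := ℝ) v t)

theorem hasDerivAt_G_fix1 (hf2 : ContDiff ℝ 2 (Fj f)) (v : E) (m : ℝ) :
    HasDerivAt (fun t => G f (v, t)) (fderiv ℝ (G f) (v, m) ((0 : E), (1 : ℝ))) m :=
  (((contDiff_G hf2).differentiable one_ne_zero) (v, m)).hasFDerivAt.comp_hasDerivAt m
    (HasDerivAt.prodMk (hasDerivAt_const m v) (hasDerivAt_id m))

theorem hasDerivAt_Fj_fix1 (hf2 : ContDiff ℝ 2 (Fj f)) (v : E) (m : ℝ) :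
    HasDerivAt (fun t => f v t) (fderiv ℝ (Fj f) (v, m) ((0 : E), (1 : ℝ))) m :=
  ((hf2.differentiable (by norm_num)) (v, m)).hasFDerivAt.comp_hasDerivAt m
    (HasDerivAt.prodMk (hasDerivAt_const m v) (hasDerivAt_id m))

/-- Derivative of `s ↦ ∂ₘf(γ s)` along a differentiable curve `γ s = (c s, s)`. -/
theorem hasDerivAt_Fm (hf2 : ContDiff ℝ 2 (Fj f)) {c : ℝ → E} {c' : E} {m : ℝ}
    (hc : HasDerivAt c c' m) :
    HasDerivAt (fun s => fderiv ℝ (Fj f) (c s, s) ((0 : E), (1 : ℝ)))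
      (fderiv ℝ (fderiv ℝ (Fj f)) (c m, m) (c', 1) ((0 : E), (1 : ℝ))) m := by
  have hF' : ContDiff ℝ 1 (fderiv ℝ (Fj f)) := hf2.fderiv_right (by norm_num)
  have hpair : HasDerivAt (fun t => (c t, t)) ((c', 1) : E × ℝ) m := HasDerivAt.prodMk hc (hasDerivAt_id m)
  have hcomp : HasDerivAt (fun s => fderiv ℝ (Fj f) (c s, s))
      (fderiv ℝ (fderiv ℝ (Fj f)) (c m, m) (c', 1)) m :=
    HasFDerivAt.comp_hasDerivAt (f := fun t => (c t, t)) m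
      ((hF'.differentiable one_ne_zero) (c m, m)).hasFDerivAt hpair
  exact (ContinuousLinearMap.apply ℝ ℝ (((0 : E), (1 : ℝ)) : E × ℝ)).hasFDerivAt.comp_hasDerivAt
    m hcomp

end Stmt13

/-- ∂²_{mm}(m H(p,m)) is the Schur complement of the block
m D²_{vv}f(v*,m) in Θ(v*,m): with w₀ = ∂_m∇_v f(v*,m), for any u solving
(m D²_{vv}f(v*,m)) u = m w₀ one has
∂²_{mm}(m H(p,m)) = ∂²_{mm}(m f(v*,·))(m) − ⟪m w₀, u⟫.
Consequently, if Θ(v,m) is positive definite for all v and m > 0, then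
m ↦ m H(p,m) is strictly convex on (0,∞) for every p. -/
theorem stmt13 {d : ℕ} (f : EuclideanSpace ℝ (Fin d) → ℝ → ℝ)
    (hf : ContDiff ℝ 2 (fun q : EuclideanSpace ℝ (Fin d) × ℝ => f q.1 q.2))
    (H : EuclideanSpace ℝ (Fin d) → ℝ → ℝ)
    (vstar : EuclideanSpace ℝ (Fin d) → ℝ → EuclideanSpace ℝ (Fin d))
    (hvstar : ContDiff ℝ 1 (fun q : EuclideanSpace ℝ (Fin d) × ℝ => vstar q.1 q.2))
    (hmin : ∀ p m, 0 < m →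
      IsLeast (Set.range fun v => ⟪p, v⟫_ℝ + f v m) (H p m))
    (huniq : ∀ p m, 0 < m → H p m = ⟪p, vstar p m⟫_ℝ + f (vstar p m) m ∧
      ∀ v, H p m = ⟪p, v⟫_ℝ + f v m → v = vstar p m)
    (hposdef : ∀ p m, 0 < m → ∀ w : EuclideanSpace ℝ (Fin d), w ≠ 0 →
      0 < ⟪w, fderiv ℝ (fun v => gradient (fun u => f u m) v) (vstar p m) w⟫_ℝ) :
    (∀ (p : EuclideanSpace ℝ (Fin d)) (m : ℝ), 0 < m →
      ∀ u : EuclideanSpace ℝ (Fin d),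
        m • (fderiv ℝ (fun v => gradient (fun u' => f u' m) v) (vstar p m)) u
          = m • deriv (fun t => gradient (fun u' => f u' t) (vstar p m)) m →
        deriv (fun t => deriv (fun s => s * H p s) t) m
          = deriv (fun t => deriv (fun s => s * f (vstar p m) s) t) m
            - ⟪m • deriv (fun t => gradient (fun u' => f u' t) (vstar p m)) m, u⟫_ℝ) ∧
    ((∀ (v : EuclideanSpace ℝ (Fin d)) (m : ℝ), 0 < m →
        ∀ (μ : ℝ) (w : EuclideanSpace ℝ (Fin d)), (μ, w) ≠ 0 →
          0 < μ ^ 2 * deriv (fun t => deriv (fun s => s * f v s) t) m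
            + 2 * μ * ⟪m • deriv (fun t => gradient (fun u' => f u' t) v) m, w⟫_ℝ
            + ⟪w, m • (fderiv ℝ (fun v' => gradient (fun u' => f u' m) v') v) w⟫_ℝ) →
      ∀ p, StrictConvexOn ℝ (Set.Ioi (0:ℝ)) (fun m => m * H p m)) := by
  have hf2 : ContDiff ℝ 2 (Stmt13.Fj f) := hf
  have hG1 : ContDiff ℝ 1 (Stmt13.G f) := Stmt13.contDiff_G hf2
  have hFdiff : Differentiable ℝ (Stmt13.Fj f) := hf2.differentiable (by norm_num)
  -- first-order condition
  have hfoc : ∀ p s, 0 < s → Stmt13.G f (vstar p s, s) = -p := by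
    intro p s hs
    have hloc : IsLocalMin (fun v => ⟪p, v⟫_ℝ + f v s) (vstar p s) := by
      apply Filter.Eventually.of_forall
      intro v
      show ⟪p, vstar p s⟫_ℝ + f (vstar p s) s ≤ ⟪p, v⟫_ℝ + f v s
      rw [← (huniq p s hs).1]
      exact (hmin p s hs).2 ⟨v, rfl⟩
    have hT : HasFDerivAt (fun v => ⟪p, v⟫_ℝ) (innerSL ℝ p) (vstar p s) :=
      (innerSL ℝ p).hasFDerivAt
    have hFf : HasFDerivAt (fun v => f v s)
        ((fderiv ℝ (Stmt13.Fj f) (vstar p s, s)).comp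
          (ContinuousLinearMap.inl ℝ (EuclideanSpace ℝ (Fin d)) ℝ)) (vstar p s) :=
      Stmt13.hasFDerivAt_fix2 (hFdiff _)
    have hsum : HasFDerivAt (fun v => ⟪p, v⟫_ℝ + f v s) _ (vstar p s) := hT.add hFf
    have h0 := hloc.fderiv_eq_zero
    rw [hsum.fderiv] at h0
    apply ext_inner_right ℝ
    intro y
    have h0y := DFunLike.congr_fun h0 y
    have h1 : ⟪Stmt13.G f (vstar p s, s), y⟫_ℝ = fderiv ℝ (Stmt13.Fj f) (vstar p s, s) (y, 0) :=
      Stmt13.inner_G hf2 (vstar p s) s y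
    simp only [ContinuousLinearMap.add_apply, ContinuousLinearMap.zero_apply] at h0y
    rw [h1]
    have hcmp : (fderiv ℝ (Stmt13.Fj f) (vstar p s, s)).comp
        (ContinuousLinearMap.inl ℝ (EuclideanSpace ℝ (Fin d)) ℝ) y
        = fderiv ℝ (Stmt13.Fj f) (vstar p s, s) (y, 0) := rfl
    rw [hcmp] at h0y
    have hpy : (innerSL ℝ p) y = ⟪p, y⟫_ℝ := rfl
    rw [hpy] at h0y
    rw [inner_neg_left]
    linarith
  -- the Schur-complement identity
  have key : ∀ (p : EuclideanSpace ℝ (Fin d)) (m : ℝ), 0 < m →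
      ∀ u : EuclideanSpace ℝ (Fin d),
        m • (fderiv ℝ (fun v => gradient (fun u' => f u' m) v) (vstar p m)) u
          = m • deriv (fun t => gradient (fun u' => f u' t) (vstar p m)) m →
        deriv (fun t => deriv (fun s => s * H p s) t) m
          = deriv (fun t => deriv (fun s => s * f (vstar p m) s) t) m
            - ⟪m • deriv (fun t => gradient (fun u' => f u' t) (vstar p m)) m, u⟫_ℝ := by
    intro p m hm u hu
    set c : ℝ → EuclideanSpace ℝ (Fin d) := fun s => vstar p s with hcdef
    have hc : ContDiff ℝ 1 c := hvstar.comp (contDiff_const.prodMk contDiff_id)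
    have hc' : ∀ s, HasDerivAt c (deriv c s) s := fun s =>
      ((hc.differentiable one_ne_zero) s).hasDerivAt
    rw [show vstar p m = c m from rfl] at hu ⊢
    -- derivative of H on (0, ∞)
    have hder1 : ∀ s, 0 < s → HasDerivAt (fun t => H p t)
        (fderiv ℝ (Stmt13.Fj f) (c s, s) (0, 1)) s := by
      intro s hs
      have hpair : HasDerivAt (fun t => (c t, t)) ((deriv c s, 1) : _ × ℝ) s :=
        HasDerivAt.prodMk (hc' s) (hasDerivAt_id s)
      have hfc : HasDerivAt (fun t => f (c t) t)
          (fderiv ℝ (Stmt13.Fj f) (c s, s) (deriv c s, 1)) s :=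
        HasFDerivAt.comp_hasDerivAt (f := fun t => (c t, t)) s (hFdiff (c s, s)).hasFDerivAt hpair
      have hic : HasDerivAt (fun t => ⟪p, c t⟫_ℝ) ⟪p, deriv c s⟫_ℝ s :=
        HasFDerivAt.comp_hasDerivAt (l := ⇑(innerSL ℝ p)) s
          ((innerSL ℝ p).hasFDerivAt) (hc' s)
      have hsum := hic.add hfc
      have heq : (fun t => H p t) =ᶠ[nhds s] (fun t => ⟪p, c t⟫_ℝ + f (c t) t) := by
        filter_upwards [isOpen_Ioi.mem_nhds hs] with t ht
        exact (huniq p t ht).1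
      have h2 := HasDerivAt.congr_of_eventuallyEq hsum heq
      have hval : ⟪p, deriv c s⟫_ℝ + fderiv ℝ (Stmt13.Fj f) (c s, s) (deriv c s, 1)
          = fderiv ℝ (Stmt13.Fj f) (c s, s) (0, 1) := by
        have hsp : ((deriv c s, 1) : _ × ℝ) = (deriv c s, 0) + (0, 1) := by
          simp [Prod.ext_iff]
        rw [hsp, map_add]
        have hig : fderiv ℝ (Stmt13.Fj f) (c s, s) (deriv c s, 0)
            = ⟪Stmt13.G f (c s, s), deriv c s⟫_ℝ := (Stmt13.inner_G hf2 _ _ _).symm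
        rw [hig, hfoc p s hs, inner_neg_left]
        ring
      rw [← hval]
      exact h2
    -- derivative of s * H p s
    have hder_mul : ∀ s, 0 < s → HasDerivAt (fun t => t * H p t)
        (H p s + s * fderiv ℝ (Stmt13.Fj f) (c s, s) (0, 1)) s := by
      intro s hs
      have h := (hasDerivAt_id s).mul (hder1 s hs)
      simpa [Pi.mul_def] using h
    have hevH : deriv (fun s => s * H p s)
        =ᶠ[nhds m] (fun s => H p s + s * fderiv ℝ (Stmt13.Fj f) (c s, s) (0, 1)) := by
      filter_upwards [isOpen_Ioi.mem_nhds hm] with t ht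
      exact (hder_mul t ht).deriv
    have hΦ : HasDerivAt (fun s => fderiv ℝ (Stmt13.Fj f) (c s, s) (0, 1))
        (fderiv ℝ (fderiv ℝ (Stmt13.Fj f)) (c m, m) (deriv c m, 1) (0, 1)) m :=
      Stmt13.hasDerivAt_Fm hf2 (hc' m)
    have h3 := (hder1 m hm).add ((hasDerivAt_id m).mul hΦ)
    have e1 : deriv (fun t => deriv (fun s => s * H p s) t) m
        = fderiv ℝ (Stmt13.Fj f) (c m, m) (0, 1)
          + (1 * fderiv ℝ (Stmt13.Fj f) (c m, m) (0, 1)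
            + m * fderiv ℝ (fderiv ℝ (Stmt13.Fj f)) (c m, m) (deriv c m, 1) (0, 1)) := by
      rw [show (fun t => deriv (fun s => s * H p s) t) = deriv (fun s => s * H p s) from rfl,
        Filter.EventuallyEq.deriv_eq hevH]
      exact h3.deriv
    -- second derivative of s * f (c m) s
    have hmulf : ∀ t : ℝ, HasDerivAt (fun s => s * f (c m) s)
        (f (c m) t + t * fderiv ℝ (Stmt13.Fj f) (c m, t) (0, 1)) t := by
      intro t
      have h := (hasDerivAt_id t).mul (Stmt13.hasDerivAt_Fj_fix1 hf2 (c m) t)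
      simpa [Pi.mul_def] using h
    have hS1 : deriv (fun s => s * f (c m) s)
        = fun t => f (c m) t + t * fderiv ℝ (Stmt13.Fj f) (c m, t) (0, 1) :=
      funext fun t => (hmulf t).deriv
    have hΦ0 : HasDerivAt (fun t => fderiv ℝ (Stmt13.Fj f) (c m, t) (0, 1))
        (fderiv ℝ (fderiv ℝ (Stmt13.Fj f)) (c m, m) (0, 1) (0, 1)) m := by
      have h := Stmt13.hasDerivAt_Fm hf2 (hasDerivAt_const m (c m))
      exact h
    have hsum2 := (Stmt13.hasDerivAt_Fj_fix1 hf2 (c m) m).add ((hasDerivAt_id m).mul hΦ0)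
    have e2 : deriv (fun t => deriv (fun s => s * f (c m) s) t) m
        = fderiv ℝ (Stmt13.Fj f) (c m, m) (0, 1)
          + (1 * fderiv ℝ (Stmt13.Fj f) (c m, m) (0, 1)
            + m * fderiv ℝ (fderiv ℝ (Stmt13.Fj f)) (c m, m) (0, 1) (0, 1)) := by
      rw [show (fun t => deriv (fun s => s * f (c m) s) t)
          = deriv (fun s => s * f (c m) s) from rfl, hS1]
      exact hsum2.deriv
    -- the b-vector and A-operator
    have hbder : HasDerivAt (fun t => gradient (fun u' => f u' t) (c m))
        (fderiv ℝ (Stmt13.G f) (c m, m) (0, 1)) m := Stmt13.hasDerivAt_G_fix1 hf2 (c m) m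
    have hb : deriv (fun t => gradient (fun u' => f u' t) (c m)) m
        = fderiv ℝ (Stmt13.G f) (c m, m) (0, 1) := hbder.deriv
    have hAeq : fderiv ℝ (fun v => gradient (fun u' => f u' m) v) (c m)
        = (fderiv ℝ (Stmt13.G f) (c m, m)).comp
          (ContinuousLinearMap.inl ℝ (EuclideanSpace ℝ (Fin d)) ℝ) :=
      (Stmt13.hasFDerivAt_G_fix2 hf2 (c m) m).fderiv
    have hu' : (fderiv ℝ (Stmt13.G f) (c m, m)) (u, 0)
        = fderiv ℝ (Stmt13.G f) (c m, m) (0, 1) := by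
      have h := smul_right_injective (EuclideanSpace ℝ (Fin d)) (ne_of_gt hm) hu
      rw [hAeq, hb] at h
      exact h
    -- differentiating the first-order condition
    have hGconst : HasDerivAt (fun s => Stmt13.G f (c s, s)) 0 m := by
      have heq : (fun s => Stmt13.G f (c s, s)) =ᶠ[nhds m] (fun _ => -p) := by
        filter_upwards [isOpen_Ioi.mem_nhds hm] with t ht
        exact hfoc p t ht
      exact (hasDerivAt_const m (-p)).congr_of_eventuallyEq heq
    have hGchain : HasDerivAt (fun s => Stmt13.G f (c s, s))
        (fderiv ℝ (Stmt13.G f) (c m, m) (deriv c m, 1)) m :=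
      HasFDerivAt.comp_hasDerivAt (f := fun t => (c t, t)) m
        ((hG1.differentiable one_ne_zero) (c m, m)).hasFDerivAt (HasDerivAt.prodMk (hc' m) (hasDerivAt_id m))
    have hzero : fderiv ℝ (Stmt13.G f) (c m, m) (deriv c m, 1) = 0 :=
      (hGconst.unique hGchain).symm
    -- symmetry of the second derivative
    have hsymm : ∀ ξ η : EuclideanSpace ℝ (Fin d) × ℝ,
        fderiv ℝ (fderiv ℝ (Stmt13.Fj f)) (c m, m) ξ η
        = fderiv ℝ (fderiv ℝ (Stmt13.Fj f)) (c m, m) η ξ :=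
      (hf2.contDiffAt).isSymmSndFDerivAt (by simp)
    have hiG : ∀ (ξ : EuclideanSpace ℝ (Fin d) × ℝ) (y : EuclideanSpace ℝ (Fin d)),
        ⟪fderiv ℝ (Stmt13.G f) (c m, m) ξ, y⟫_ℝ
        = fderiv ℝ (fderiv ℝ (Stmt13.Fj f)) (c m, m) ξ (y, 0) :=
      fun ξ y => Stmt13.inner_fderiv_G hf2 (c m, m) ξ y
    have hsplit : ∀ η : EuclideanSpace ℝ (Fin d) × ℝ,
        fderiv ℝ (fderiv ℝ (Stmt13.Fj f)) (c m, m) (deriv c m, 1) η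
        = fderiv ℝ (fderiv ℝ (Stmt13.Fj f)) (c m, m) (deriv c m, 0) η
          + fderiv ℝ (fderiv ℝ (Stmt13.Fj f)) (c m, m) (0, 1) η := by
      intro η
      have hsp : ((deriv c m, 1) : _ × ℝ) = (deriv c m, 0) + (0, 1) := by
        simp [Prod.ext_iff]
      rw [hsp, map_add, ContinuousLinearMap.add_apply]
    have hkill : ∀ y : EuclideanSpace ℝ (Fin d),
        fderiv ℝ (fderiv ℝ (Stmt13.Fj f)) (c m, m) (deriv c m, 0) (y, 0)
        = - fderiv ℝ (fderiv ℝ (Stmt13.Fj f)) (c m, m) (0, 1) (y, 0) := by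
      intro y
      have h0 : fderiv ℝ (fderiv ℝ (Stmt13.Fj f)) (c m, m) (deriv c m, 1) (y, 0) = 0 := by
        rw [← hiG (deriv c m, 1) y, hzero]
        simp
      have h := hsplit (y, 0)
      rw [h0] at h
      linarith
    have hZ : fderiv ℝ (fderiv ℝ (Stmt13.Fj f)) (c m, m) (deriv c m, 0) (0, 1)
        = - ⟪fderiv ℝ (Stmt13.G f) (c m, m) (0, 1), u⟫_ℝ :=
      calc fderiv ℝ (fderiv ℝ (Stmt13.Fj f)) (c m, m) (deriv c m, 0) (0, 1)
          = fderiv ℝ (fderiv ℝ (Stmt13.Fj f)) (c m, m) (0, 1) (deriv c m, 0) := hsymm _ _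
        _ = ⟪fderiv ℝ (Stmt13.G f) (c m, m) (0, 1), deriv c m⟫_ℝ := (hiG _ _).symm
        _ = ⟪fderiv ℝ (Stmt13.G f) (c m, m) (u, 0), deriv c m⟫_ℝ := by rw [hu']
        _ = fderiv ℝ (fderiv ℝ (Stmt13.Fj f)) (c m, m) (u, 0) (deriv c m, 0) := hiG _ _
        _ = fderiv ℝ (fderiv ℝ (Stmt13.Fj f)) (c m, m) (deriv c m, 0) (u, 0) := hsymm _ _
        _ = - fderiv ℝ (fderiv ℝ (Stmt13.Fj f)) (c m, m) (0, 1) (u, 0) := hkill u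
        _ = - ⟪fderiv ℝ (Stmt13.G f) (c m, m) (0, 1), u⟫_ℝ := by rw [hiG]
    -- assemble
    rw [e1, e2, hb, real_inner_smul_left, hsplit ((0, 1) : _ × ℝ), hZ]
    ring
  refine ⟨key, ?_⟩
  intro hΘ p
  apply strictConvexOn_of_deriv2_pos' (convex_Ioi 0)
  · -- continuity
    have hcv : Continuous fun s : ℝ => vstar p s :=
      (hvstar.continuous).comp (continuous_const.prodMk continuous_id)
    have hcont : Continuous fun s : ℝ => s * (⟪p, vstar p s⟫_ℝ + f (vstar p s) s) :=
      continuous_id.mul ((continuous_const.inner hcv).add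
        ((hf.continuous).comp (hcv.prodMk continuous_id)))
    exact hcont.continuousOn.congr fun s hs => by
      show s * H p s = _
      rw [(huniq p s hs).1]
  · intro m hm
    rw [Set.mem_Ioi] at hm
    have hApos : ∀ w : EuclideanSpace ℝ (Fin d), w ≠ 0 →
        0 < ⟪w, (fderiv ℝ (fun v => gradient (fun u' => f u' m) v) (vstar p m)) w⟫_ℝ := by
      intro w hw
      have h := hΘ (vstar p m) m hm 0 w (by simp [Prod.mk_eq_zero, hw])
      rw [real_inner_smul_right] at h
      have h2 : 0 < m * ⟪w, (fderiv ℝ (fun v => gradient (fun u' => f u' m) v)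
          (vstar p m)) w⟫_ℝ := by linarith
      rcases mul_pos_iff.mp h2 with ⟨_, hx⟩ | ⟨hm', _⟩
      · exact hx
      · linarith
    have hker : ∀ w, (fderiv ℝ (fun v => gradient (fun u' => f u' m) v) (vstar p m)) w = 0 →
        w = 0 := by
      intro w hw0
      by_contra hne
      have h := hApos w hne
      rw [hw0, inner_zero_right] at h
      exact lt_irrefl 0 h
    have hinj : Function.Injective
        ⇑(fderiv ℝ (fun v => gradient (fun u' => f u' m) v) (vstar p m)) := by
      intro x y hxy
      have h1 : (fderiv ℝ (fun v => gradient (fun u' => f u' m) v) (vstar p m)) (x - y) = 0 := by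
        rw [map_sub, hxy, sub_self]
      exact sub_eq_zero.mp (hker _ h1)
    have hsurj : Function.Surjective
        ⇑(fderiv ℝ (fun v => gradient (fun u' => f u' m) v) (vstar p m)) :=
      (LinearMap.injective_iff_surjective
        (f := ((fderiv ℝ (fun v => gradient (fun u' => f u' m) v) (vstar p m))
          : EuclideanSpace ℝ (Fin d) →ₗ[ℝ] EuclideanSpace ℝ (Fin d)))).mp hinj
    obtain ⟨u, hu⟩ := hsurj (deriv (fun t => gradient (fun u' => f u' t) (vstar p m)) m)
    have hu' : m • (fderiv ℝ (fun v => gradient (fun u' => f u' m) v) (vstar p m)) u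
        = m • deriv (fun t => gradient (fun u' => f u' t) (vstar p m)) m := by rw [hu]
    have hkey := key p m hm u hu'
    have hpos := hΘ (vstar p m) m hm 1 (-u) (by simp [Prod.mk_eq_zero])
    have hAneg : (fderiv ℝ (fun v => gradient (fun u' => f u' m) v) (vstar p m)) (-u)
        = - deriv (fun t => gradient (fun u' => f u' t) (vstar p m)) m := by
      rw [map_neg, hu]
    rw [hAneg] at hpos
    have hcomm := real_inner_comm u
      (m • deriv (fun t => gradient (fun u' => f u' t) (vstar p m)) m)
    simp only [one_pow, one_mul, mul_one, smul_neg, inner_neg_right, inner_neg_left,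
      inner_neg_neg, neg_neg] at hpos
    show 0 < deriv (fun t => deriv (fun s => s * H p s) t) m
    rw [hkey]
    linarith
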